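/- Let π be a permutation of {1,…,d} and let A be a real d×d matrix with A[i,j] = 0 whenever π(i) ≥ π(j). Then tr(exp(A ∘ A)) = d, i.e., the acyclicity penalty h(A) = tr(exp(A∘A)) − d vanishes. -/

import Mathlib

open Matrix NormedSpace
open scoped Matrix

theorem acyclicity_penalty_vanishes_of_topological_order {d : ℕ} (π : Equiv.Perm (Fin d))
    (A : Matrix (Fin d) (Fin d) ℝ) (hA : ∀ i j, π j ≤ π i → A i j = 0) :
    (exp (A ⊙ A)).trace = d := by
  set B : Matrix (Fin d) (Fin d) ℝ := A ⊙ A with hBdef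
  have hB : ∀ i j, (π j : ℕ) ≤ (π i : ℕ) → B i j = 0 := by
    intro i j h
    have : A i j = 0 := hA i j (by exact_mod_cast h)
    simp [hBdef, Matrix.hadamard, this]
  -- key estimate on powers
  have key : ∀ k : ℕ, ∀ i j, (B ^ k) i j ≠ 0 → (π i : ℕ) + k ≤ (π j : ℕ) := by
    intro k
    induction k with
    | zero =>
      intro i j h
      have : i = j := by
        by_contra hij
        simp [Matrix.one_apply_ne hij] at h
      simp [this]
    | succ k ih =>
      intro i j h
      rw [pow_succ, Matrix.mul_apply] at h
      obtain ⟨l, hl⟩ : ∃ l, (B ^ k) i l * B l j ≠ 0 := by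
        by_contra hc
        push_neg at hc
        exact h (Finset.sum_eq_zero fun l _ => hc l)
      have h1 : (π i : ℕ) + k ≤ (π l : ℕ) := ih i l (fun h0 => hl (by simp [h0]))
      have h2 : (π l : ℕ) < (π j : ℕ) := by
        by_contra h0
        push_neg at h0
        exact hl (by simp [hB l j h0])
      omega
  have hpow : ∀ n, d ≤ n → B ^ n = (0 : Matrix (Fin d) (Fin d) ℝ) := by
    intro n hn
    ext i j
    by_contra h
    have := key n i j h
    have := (π j).is_lt
    omega
  have htr : ∀ n, 1 ≤ n → (B ^ n).trace = 0 := by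
    intro n hn
    apply Finset.sum_eq_zero
    intro i _
    by_contra h
    have := key n i i (by simpa [Matrix.diag] using h)
    omega
  rw [exp_eq_tsum ℝ]
  beta_reduce
  have : (∑' n : ℕ, ((n.factorial : ℝ))⁻¹ • B ^ n) = ∑ n ∈ Finset.range (d + 1), ((n.factorial : ℝ))⁻¹ • B ^ n := by
    apply tsum_eq_sum
    intro n hn
    rw [hpow n (by simp [Finset.mem_range] at hn; omega)]
    simp
  rw [this, Matrix.trace_sum]
  rw [Finset.sum_eq_single 0]
  · simp [Matrix.trace_one]
  · intro n _ hn
    rw [Matrix.trace_smul, htr n (Nat.one_le_iff_ne_zero.mpr hn)]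
    simp
  · simp
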